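/- Let {E^k}_{k=1}^K be a finite collection of measurable subsets of ℝ^d with union E of finite measure, and let M ≥ 2 be an integer. Then Σ_k |E^k| ≤ C_M ( |E| + |E|^{(M-1)/M} ( Σ_{k_1 < k_2 < ... < k_M} |E^{k_1} ∩ ... ∩ E^{k_M}| )^{1/M} ), where C_M depends only on M. -/

import Mathlib

open MeasureTheory ENNReal

lemma nat_choose_aux {M n : ℕ} (hM : 1 ≤ M) (h : 2 * M ≤ n) :
    n ^ M ≤ (2 * M) ^ M * n.choose M := by
  have h1 : n ^ M ≤ 2 ^ M * n.descFactorial M := by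
    calc n ^ M = ∏ _i ∈ Finset.range M, n := by
          rw [Finset.prod_const, Finset.card_range]
      _ ≤ ∏ i ∈ Finset.range M, 2 * (n - i) := Finset.prod_le_prod' fun i hi => by
          have := Finset.mem_range.mp hi; omega
      _ = 2 ^ M * ∏ i ∈ Finset.range M, (n - i) := by
          rw [Finset.prod_mul_distrib, Finset.prod_const, Finset.card_range]
      _ = 2 ^ M * n.descFactorial M := by rw [Nat.descFactorial_eq_prod_range]
  calc n ^ M ≤ 2 ^ M * n.descFactorial M := h1
    _ = 2 ^ M * (M.factorial * n.choose M) := by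
        rw [Nat.descFactorial_eq_factorial_mul_choose]
    _ ≤ 2 ^ M * (M ^ M * n.choose M) := by
        gcongr
        exact Nat.factorial_le_pow M
    _ = (2 * M) ^ M * n.choose M := by rw [mul_pow]; ring

theorem pointwise_aux {M n : ℕ} (hM : 2 ≤ M) :
    (n : ℝ≥0∞) ≤ (2 * M : ℕ) + (2 * M : ℕ) * (n.choose M : ℝ≥0∞) ^ ((1 : ℝ) / M) := by
  rcases le_or_gt n (2 * M) with h | h
  · exact le_add_right (by exact_mod_cast Nat.cast_le.mpr h)
  · refine le_add_left ?_
    have hMpos : (0:ℝ) < M := by positivity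
    have key : (n : ℝ≥0∞) ^ (M : ℝ) ≤ ((2 * M : ℕ) : ℝ≥0∞) ^ (M : ℝ) * (n.choose M : ℝ≥0∞) := by
      rw [ENNReal.rpow_natCast, ENNReal.rpow_natCast]
      exact_mod_cast Nat.cast_le.mpr (nat_choose_aux (by omega) h.le)
    have := ENNReal.rpow_le_rpow key (by positivity : (0:ℝ) ≤ 1 / M)
    rw [← ENNReal.rpow_mul, mul_one_div, div_self hMpos.ne', ENNReal.rpow_one] at this
    refine this.trans ?_
    rw [ENNReal.mul_rpow_of_nonneg _ _ (by positivity : (0:ℝ) ≤ 1 / M),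
      ← ENNReal.rpow_mul, mul_one_div, div_self hMpos.ne', ENNReal.rpow_one]

/-- Bound on the sum of measures in terms of the union and `M`-fold intersections. -/
theorem stmt2 (d M : ℕ) (hM : 2 ≤ M) :
    ∃ C : ℝ, 0 < C ∧ ∀ (K : ℕ) (E : Fin K → Set (Fin d → ℝ)),
      (∀ k, MeasurableSet (E k)) →
      volume (⋃ k, E k) < ⊤ →
      ∑ k, (volume (E k)).toReal ≤
        C * ((volume (⋃ k, E k)).toReal +
          (volume (⋃ k, E k)).toReal ^ (((M : ℝ) - 1) / M) *
          (∑ s ∈ Finset.powersetCard M (Finset.univ : Finset (Fin K)),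
            (volume (⋂ i ∈ s, E i)).toReal) ^ ((1 : ℝ) / M)) := by
  classical
  have h2M0 : (2:ℝ) ≤ (M:ℝ) := by exact_mod_cast hM
  refine ⟨2 * M, by linarith, ?_⟩
  intro K E hE hU
  have h2M : (2:ℝ) ≤ (M:ℝ) := by exact_mod_cast hM
  set μ : Measure (Fin d → ℝ) := volume with hμ
  set U : Set (Fin d → ℝ) := ⋃ k, E k with hUdef
  have hUmeas : MeasurableSet U := MeasurableSet.iUnion hE
  have ha : μ U ≠ ⊤ := hU.ne
  have hEsub : ∀ k, E k ⊆ U := fun k => Set.subset_iUnion E k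
  have hEfin : ∀ k, μ (E k) ≠ ⊤ := fun k => ((measure_mono (hEsub k)).trans_lt hU).ne
  -- the counting function
  set N : (Fin d → ℝ) → ℕ := fun x => (Finset.univ.filter fun k => x ∈ E k).card with hN
  have hNmeas : Measurable N := by
    have : N = fun x => ∑ k : Fin K, if x ∈ E k then 1 else 0 := by
      funext x; rw [Finset.sum_boole]; simp [hN]
    rw [this]
    exact Finset.measurable_sum _ fun k _ => Measurable.ite (hE k) measurable_const
      measurable_const
  -- Step 1: ∑ μ(E k) = ∫ N
  have step1 : ∑ k, μ (E k) = ∫⁻ x, (N x : ℝ≥0∞) ∂μ := by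
    have : ∀ x, ((N x : ℝ≥0∞)) = ∑ k : Fin K, (E k).indicator (1 : (Fin d → ℝ) → ℝ≥0∞) x := by
      intro x
      simp only [hN, Set.indicator_apply, Pi.one_apply]
      rw [← Finset.sum_boole]
    rw [lintegral_congr this, lintegral_finset_sum]
    · simp_rw [lintegral_indicator_one (hE _)]
    · exact fun k _ => (measurable_one.indicator (hE k))
  -- Step 2: ∑_{|s|=M} μ(⋂ s) = ∫ choose (N x) M
  set S : ℝ≥0∞ := ∑ s ∈ Finset.powersetCard M (Finset.univ : Finset (Fin K)),
      μ (⋂ i ∈ s, E i) with hS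
  have hInterMeas : ∀ s : Finset (Fin K), MeasurableSet (⋂ i ∈ s, E i) :=
    fun s => MeasurableSet.biInter (Set.to_countable _) fun i _ => hE i
  have step2 : S = ∫⁻ x, ((N x).choose M : ℝ≥0∞) ∂μ := by
    have hpt : ∀ x, ((N x).choose M : ℝ≥0∞) =
        ∑ s ∈ Finset.powersetCard M (Finset.univ : Finset (Fin K)),
          (⋂ i ∈ s, E i).indicator (1 : (Fin d → ℝ) → ℝ≥0∞) x := by
      intro x
      have h1 : ∀ s : Finset (Fin K), (⋂ i ∈ s, E i).indicator (1 : (Fin d → ℝ) → ℝ≥0∞) x =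
          if s ⊆ Finset.univ.filter (fun k => x ∈ E k) then 1 else 0 := by
        intro s
        have : (x ∈ ⋂ i ∈ s, E i) ↔ s ⊆ Finset.univ.filter (fun k => x ∈ E k) := by
          simp [Set.mem_iInter, Finset.subset_iff]
        simp [Set.indicator_apply, this]
      rw [Finset.sum_congr rfl fun s _ => h1 s, Finset.sum_boole]
      have h2 : (Finset.powersetCard M (Finset.univ : Finset (Fin K))).filter
          (fun s => s ⊆ Finset.univ.filter (fun k => x ∈ E k)) =
          Finset.powersetCard M (Finset.univ.filter (fun k => x ∈ E k)) := by
        ext s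
        simp only [Finset.mem_filter, Finset.mem_powersetCard]
        constructor
        · rintro ⟨⟨-, hc⟩, hsub⟩; exact ⟨hsub, hc⟩
        · rintro ⟨hsub, hc⟩; exact ⟨⟨Finset.subset_univ s, hc⟩, hsub⟩
      rw [h2, Finset.card_powersetCard]
    rw [lintegral_congr hpt, lintegral_finset_sum]
    · simp_rw [lintegral_indicator_one (hInterMeas _)]; exact hS
    · exact fun s _ => measurable_one.indicator (hInterMeas s)
  -- measurability helpers
  have hgmeas : Measurable fun x => ((N x).choose M : ℝ≥0∞) ^ ((1 : ℝ) / M) :=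
    Measurable.comp (g := fun n : ℕ => ((n.choose M : ℝ≥0∞)) ^ ((1 : ℝ) / M))
      measurable_from_top hNmeas
  have hfmeas : Measurable fun x => U.indicator (1 : (Fin d → ℝ) → ℝ≥0∞) x :=
    measurable_one.indicator hUmeas
  -- Step 3: pointwise bound
  have hNzero : ∀ x, x ∉ U → N x = 0 := by
    intro x hx
    simp only [hN, Finset.card_eq_zero, Finset.filter_eq_empty_iff]
    intro k _
    exact fun hk => hx (hEsub k hk)
  have step3 : ∀ x, (N x : ℝ≥0∞) ≤
      (2 * M : ℕ) * U.indicator (1 : (Fin d → ℝ) → ℝ≥0∞) x +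
      (2 * M : ℕ) * (U.indicator (1 : (Fin d → ℝ) → ℝ≥0∞) x *
        ((N x).choose M : ℝ≥0∞) ^ ((1 : ℝ) / M)) := by
    intro x
    by_cases hx : x ∈ U
    · simp only [Set.indicator_of_mem hx, Pi.one_apply, mul_one, one_mul]
      exact pointwise_aux hM
    · simp [hNzero x hx, Set.indicator_of_notMem hx]
  -- Hölder
  have hMR : (0:ℝ) < M := by linarith
  have hM1 : (0:ℝ) < (M:ℝ) - 1 := by linarith
  have hpq : Real.HolderConjugate ((M : ℝ) / ((M : ℝ) - 1)) (M : ℝ) := by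
    exact ((Real.holderConjugate_iff_eq_conjExponent (by linarith)).mpr rfl).symm
  have holder := ENNReal.lintegral_mul_le_Lp_mul_Lq μ hpq hfmeas.aemeasurable
      hgmeas.aemeasurable
  have hMne : ((M:ℝ) - 1) ≠ 0 := by
    have : (2:ℝ) ≤ (M:ℝ) := by exact_mod_cast hM
    linarith
  have hfp : ∀ x, (U.indicator (1 : (Fin d → ℝ) → ℝ≥0∞) x) ^ ((M : ℝ) / ((M : ℝ) - 1)) =
      U.indicator (1 : (Fin d → ℝ) → ℝ≥0∞) x := by
    intro x
    by_cases hx : x ∈ U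
    · simp [Set.indicator_of_mem hx]
    · simp [Set.indicator_of_notMem hx,
        ENNReal.zero_rpow_of_pos (div_pos hMR hM1)]
  have hgq : ∀ x, (((N x).choose M : ℝ≥0∞) ^ ((1 : ℝ) / M)) ^ (M : ℝ) =
      ((N x).choose M : ℝ≥0∞) := by
    intro x
    rw [← ENNReal.rpow_mul, one_div_mul_cancel hMR.ne', ENNReal.rpow_one]
  have holder' : (∫⁻ x, U.indicator (1 : (Fin d → ℝ) → ℝ≥0∞) x *
        ((N x).choose M : ℝ≥0∞) ^ ((1 : ℝ) / M) ∂μ) ≤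
      (μ U) ^ (((M : ℝ) - 1) / M) * S ^ ((1 : ℝ) / M) := by
    refine le_trans (by exact holder) ?_
    have e1 : (∫⁻ x, (U.indicator (1 : (Fin d → ℝ) → ℝ≥0∞) x) ^ ((M : ℝ) / ((M : ℝ) - 1)) ∂μ)
        = μ U := by
      rw [lintegral_congr hfp, lintegral_indicator_one hUmeas]
    have e2 : (∫⁻ x, (((N x).choose M : ℝ≥0∞) ^ ((1 : ℝ) / M)) ^ (M : ℝ) ∂μ) = S := by
      rw [lintegral_congr hgq, ← step2]
    rw [e1, e2, one_div_div]
  -- assemble in ℝ≥0∞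
  have main : ∑ k, μ (E k) ≤
      (2 * M : ℕ) * (μ U + μ U ^ (((M : ℝ) - 1) / M) * S ^ ((1 : ℝ) / M)) := by
    rw [step1]
    calc ∫⁻ x, (N x : ℝ≥0∞) ∂μ
        ≤ ∫⁻ x, ((2 * M : ℕ) * U.indicator (1 : (Fin d → ℝ) → ℝ≥0∞) x +
            (2 * M : ℕ) * (U.indicator (1 : (Fin d → ℝ) → ℝ≥0∞) x *
              ((N x).choose M : ℝ≥0∞) ^ ((1 : ℝ) / M))) ∂μ :=
          lintegral_mono step3
      _ = (2 * M : ℕ) * μ U + (2 * M : ℕ) * ∫⁻ x, U.indicator (1 : (Fin d → ℝ) → ℝ≥0∞) x *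
            ((N x).choose M : ℝ≥0∞) ^ ((1 : ℝ) / M) ∂μ := by
          rw [lintegral_add_left (by fun_prop), lintegral_const_mul _ (by fun_prop),
            lintegral_const_mul _ (by fun_prop), lintegral_indicator_one hUmeas]
      _ ≤ (2 * M : ℕ) * μ U + (2 * M : ℕ) *
            (μ U ^ (((M : ℝ) - 1) / M) * S ^ ((1 : ℝ) / M)) := by
          gcongr
      _ = (2 * M : ℕ) * (μ U + μ U ^ (((M : ℝ) - 1) / M) * S ^ ((1 : ℝ) / M)) := by
          ring
  -- pass to toReal
  have hIfin : ∀ s ∈ Finset.powersetCard M (Finset.univ : Finset (Fin K)),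
      μ (⋂ i ∈ s, E i) ≠ ⊤ := by
    intro s hs
    rw [Finset.mem_powersetCard] at hs
    have hcard : 0 < s.card := by omega
    obtain ⟨i, hi⟩ := Finset.card_pos.mp hcard
    have hsub : (⋂ i ∈ s, E i) ⊆ U :=
      (Set.biInter_subset_of_mem hi).trans (hEsub i)
    exact ((measure_mono hsub).trans_lt hU).ne
  have hSfin : S ≠ ⊤ := by
    rw [hS]
    exact (ENNReal.sum_lt_top.mpr fun s hs => (hIfin s hs).lt_top).ne
  have hrpowfin : μ U ^ (((M : ℝ) - 1) / M) ≠ ⊤ :=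
    ENNReal.rpow_ne_top_of_nonneg (div_nonneg (by linarith) hMR.le) ha
  have hSrfin : S ^ ((1 : ℝ) / M) ≠ ⊤ :=
    ENNReal.rpow_ne_top_of_nonneg (by positivity) hSfin
  have hRHSfin : (2 * M : ℕ) * (μ U + μ U ^ (((M : ℝ) - 1) / M) * S ^ ((1 : ℝ) / M)) ≠ ⊤ := by
    exact ENNReal.mul_ne_top (ENNReal.natCast_ne_top _)
      (ENNReal.add_ne_top.mpr ⟨ha, ENNReal.mul_ne_top hrpowfin hSrfin⟩)
  have hto := ENNReal.toReal_mono hRHSfin main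
  rw [ENNReal.toReal_sum (fun k _ => hEfin k)] at hto
  refine hto.trans (le_of_eq ?_)
  rw [ENNReal.toReal_mul, ENNReal.toReal_add ha (ENNReal.mul_ne_top hrpowfin hSrfin),
    ENNReal.toReal_mul, ← ENNReal.toReal_rpow, ← ENNReal.toReal_rpow,
    ENNReal.toReal_sum hIfin]
  simp only [ENNReal.toReal_natCast]
  push_cast
  ring
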